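/- The union of a directed (under inclusion) family of open projective convex sets in a real projective space is an open projective convex set, provided the union is not the whole space; in fact the union is never the whole space when all members are convex, since a projective convex set contains no full projective line and by compactness a directed open cover containing a line would have a member containing that line. -/

import Mathlib

open scoped LinearAlgebra.Projectivization
open Projectivization

/-- The "positive" projective segment joining the points represented by `u` and `v`:
`{π(a•u + b•v) : a*b ≥ 0, (a,b) ≠ (0,0)}`. -/
def projSeg {W : Type*} [AddCommGroup W] [Module ℝ W] (u v : W) : Set (ℙ ℝ W) :=
  {x | ∃ (a b : ℝ) (h : a • u + b • v ≠ 0),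
    0 ≤ a * b ∧ x = Projectivization.mk ℝ (a • u + b • v) h}

/-- The "negative" projective segment joining the points represented by `u` and `v`:
`{π(a•u + b•v) : a*b ≤ 0, (a,b) ≠ (0,0)}`. -/
def projSegN {W : Type*} [AddCommGroup W] [Module ℝ W] (u v : W) : Set (ℙ ℝ W) :=
  {x | ∃ (a b : ℝ) (h : a • u + b • v ≠ 0),
    a * b ≤ 0 ∧ x = Projectivization.mk ℝ (a • u + b • v) h}

/-- A set in a real projective space is projective convex if for any two distinct points of it,
exactly one of the two projective segments joining them is contained in it. -/
def IsProjConvex {W : Type*} [AddCommGroup W] [Module ℝ W] (S : Set (ℙ ℝ W)) : Prop :=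
  ∀ p ∈ S, ∀ q ∈ S, p ≠ q →
    Xor' (projSeg p.rep q.rep ⊆ S) (projSegN p.rep q.rep ⊆ S)

/-- The quotient topology on a real projective space. -/
noncomputable instance projTopInst {W : Type*} [NormedAddCommGroup W] [NormedSpace ℝ W] :
    TopologicalSpace (ℙ ℝ W) :=
  instTopologicalSpaceQuotient

/-- The union of a directed (under inclusion) family of open projective convex sets in a real
projective space is an open projective convex set. -/
theorem sUnion_directed_open_projConvex
    {V : Type*} [NormedAddCommGroup V] [NormedSpace ℝ V] [FiniteDimensional ℝ V]
    (F : Set (Set (ℙ ℝ V))) (hne : F.Nonempty) (hdir : DirectedOn (· ⊆ ·) F)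
    (hF : ∀ S ∈ F, IsOpen S ∧ IsProjConvex S) :
    IsOpen (⋃₀ F) ∧ IsProjConvex (⋃₀ F) := by
  refine ⟨isOpen_sUnion fun S hS => (hF S hS).1, ?_⟩
  intro p hp q hq hpq
  obtain ⟨S₁, hS₁F, hpS₁⟩ := hp
  obtain ⟨S₂, hS₂F, hqS₂⟩ := hq
  obtain ⟨S, hSF, hS₁, hS₂⟩ := hdir S₁ hS₁F S₂ hS₂F
  have hpS : p ∈ S := hS₁ hpS₁
  have hqS : q ∈ S := hS₂ hqS₂
  set u := p.rep with hu
  set v := q.rep with hv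
  have hun : u ≠ 0 := p.rep_nonzero
  have hvn : v ≠ 0 := q.rep_nonzero
  -- nonvanishing of combinations
  have hnz : ∀ a b : ℝ, (a ≠ 0 ∨ b ≠ 0) → a • u + b • v ≠ 0 := by
    intro a b hab h
    rcases eq_or_ne a 0 with ha | ha
    · subst ha
      simp only [zero_smul, zero_add] at h
      rcases hab with h' | hb
      · exact h' rfl
      · exact hvn (by simpa [smul_eq_zero, hb] using h)
    · have h2 : a • u = (-b) • v := by
        rw [neg_smul]
        exact eq_neg_of_add_eq_zero_left h
      have : u = (a⁻¹ * (-b)) • v := by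
        rw [mul_smul, ← h2, inv_smul_smul₀ ha]
      apply hpq
      rw [← p.mk_rep, ← q.mk_rep]
      exact (mk_eq_mk_iff' ℝ p.rep q.rep p.rep_nonzero q.rep_nonzero).2 ⟨_, this.symm⟩
  -- the projective line through p and q
  let g : ℝ × ℝ → ℙ ℝ V := fun ab =>
    if h : ab.1 ≠ 0 ∨ ab.2 ≠ 0 then Projectivization.mk ℝ (ab.1 • u + ab.2 • v) (hnz _ _ h)
    else p
  set L : Set (ℙ ℝ V) := g '' (Metric.sphere (0 : ℝ × ℝ) 1) with hL
  have hLcompact : IsCompact L := by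
    apply (isCompact_sphere _ _).image_of_continuousOn
    intro ab hab
    have habne : ab.1 ≠ 0 ∨ ab.2 ≠ 0 := by
      by_contra h
      push_neg at h
      have : ab = 0 := Prod.ext h.1 h.2
      simp [this] at hab
    -- g agrees with a continuous function near ab
    have : ContinuousOn g {cd : ℝ × ℝ | cd.1 ≠ 0 ∨ cd.2 ≠ 0} := by
      have hcont : Continuous fun cd : {cd : ℝ × ℝ // cd.1 ≠ 0 ∨ cd.2 ≠ 0} =>
          (⟨cd.1.1 • u + cd.1.2 • v, hnz _ _ cd.2⟩ : {w : V // w ≠ 0}) := by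
        refine Continuous.subtype_mk ?_ _
        fun_prop
      have : Continuous fun cd : {cd : ℝ × ℝ // cd.1 ≠ 0 ∨ cd.2 ≠ 0} => g cd.1 := by
        have := (continuous_quotient_mk' (s := projectivizationSetoid ℝ V)).comp hcont
        exact this.congr (fun cd => by simp only [g, dif_pos cd.2]; rfl)
      rw [continuousOn_iff_continuous_restrict]
      exact this
    exact (this.continuousAt (by
      have : IsOpen {cd : ℝ × ℝ | cd.1 ≠ 0 ∨ cd.2 ≠ 0} := by
        have : {cd : ℝ × ℝ | cd.1 ≠ 0 ∨ cd.2 ≠ 0} = ({cd : ℝ × ℝ | cd.1 = 0} ∩ {cd | cd.2 = 0})ᶜ := by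
          ext cd; simp only [Set.mem_setOf_eq, Set.mem_compl_iff, Set.mem_inter_iff]; tauto
        rw [this]
        exact (((isClosed_eq continuous_fst continuous_const).inter
          (isClosed_eq continuous_snd continuous_const))).isOpen_compl
      exact this.mem_nhds habne)).continuousWithinAt
  -- every segment point is in L
  have hseg_subset : ∀ x ∈ projSeg u v ∪ projSegN u v, x ∈ L := by
    rintro x (⟨a, b, h, -, rfl⟩ | ⟨a, b, h, -, rfl⟩) <;>
    · have hab : a ≠ 0 ∨ b ≠ 0 := by
        by_contra hc
        push_neg at hc
        exact h (by simp [hc.1, hc.2])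
      set r : ℝ := ‖(a, b)‖ with hr
      have hrpos : 0 < r := by
        rw [hr, norm_pos_iff]
        intro hc
        rcases hab with h' | h' <;> simp [Prod.ext_iff] at hc <;>
          [exact h' hc.1; exact h' hc.2]
      refine ⟨(a / r, b / r), ?_, ?_⟩
      · simp only [Metric.mem_sphere, dist_zero_right]
        have : (a / r, b / r) = r⁻¹ • (a, b) := by
          simp [Prod.smul_def, div_eq_inv_mul]
        rw [this, norm_smul, norm_inv, Real.norm_eq_abs, abs_of_pos hrpos, ← hr,
          inv_mul_cancel₀ hrpos.ne']
      · have habr : a / r ≠ 0 ∨ b / r ≠ 0 := by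
          rcases hab with h' | h'
          · exact Or.inl (div_ne_zero h' hrpos.ne')
          · exact Or.inr (div_ne_zero h' hrpos.ne')
        simp only [g, dif_pos habr]
        rw [mk_eq_mk_iff' (K := ℝ)]
        refine ⟨r⁻¹, ?_⟩
        simp only [smul_add, smul_smul]
        rw [inv_mul_eq_div, inv_mul_eq_div]
  -- every point of L is in one of the segments
  have hL_subset : L ⊆ projSeg u v ∪ projSegN u v := by
    rintro x ⟨ab, hab, rfl⟩
    have habne : ab.1 ≠ 0 ∨ ab.2 ≠ 0 := by
      by_contra h
      push_neg at h
      have : ab = 0 := Prod.ext h.1 h.2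
      simp [this] at hab
    simp only [g, dif_pos habne]
    rcases le_or_gt 0 (ab.1 * ab.2) with h | h
    · exact Or.inl ⟨ab.1, ab.2, hnz _ _ habne, h, rfl⟩
    · exact Or.inr ⟨ab.1, ab.2, hnz _ _ habne, h.le, rfl⟩
  have hpseg : p ∈ projSeg u v := by
    refine ⟨1, 0, by simpa using hun, by norm_num, ?_⟩
    rw [← p.mk_rep]
    exact ((mk_eq_mk_iff' ℝ _ _ _ _).2 ⟨1, by module⟩).symm
  have hqseg : q ∈ projSeg u v := by
    refine ⟨0, 1, by simpa using hvn, by norm_num, ?_⟩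
    rw [← q.mk_rep]
    exact ((mk_eq_mk_iff' ℝ _ _ _ _).2 ⟨1, by module⟩).symm
  -- the key: not both segments are in the union
  have key : ¬ (projSeg u v ⊆ ⋃₀ F ∧ projSegN u v ⊆ ⋃₀ F) := by
    rintro ⟨h1, h2⟩
    have hLU : L ⊆ ⋃₀ F := fun x hx => by
      rcases hL_subset hx with h | h
      · exact h1 h
      · exact h2 h
    have : Nonempty F := hne.to_subtype
    obtain ⟨⟨T, hTF⟩, hLT⟩ := hLcompact.elim_directed_cover (fun T : F => (T : Set (ℙ ℝ V)))
      (fun T => (hF T T.2).1)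
      (by rwa [← Set.sUnion_eq_iUnion])
      (fun A B => by
        obtain ⟨C, hCF, hAC, hBC⟩ := hdir A A.2 B B.2
        exact ⟨⟨C, hCF⟩, hAC, hBC⟩)
    have hconv := (hF T hTF).2 p (hLT (hseg_subset p (Or.inl hpseg)))
      q (hLT (hseg_subset q (Or.inl hqseg))) hpq
    rw [← hu, ← hv] at hconv
    rcases hconv with ⟨-, hc⟩ | ⟨-, hc⟩
    · exact hc fun x hx => hLT (hseg_subset x (Or.inr hx))
    · exact hc fun x hx => hLT (hseg_subset x (Or.inl hx))
  have hconvS := (hF S hSF).2 p hpS q hqS hpq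
  rw [← hu, ← hv] at hconvS
  have hSsub : S ⊆ ⋃₀ F := Set.subset_sUnion_of_mem hSF
  rcases hconvS with ⟨h1, -⟩ | ⟨h1, -⟩
  · exact Or.inl ⟨h1.trans hSsub, fun h2 => key ⟨h1.trans hSsub, h2⟩⟩
  · exact Or.inr ⟨h1.trans hSsub, fun h2 => key ⟨h2, h1.trans hSsub⟩⟩
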